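/- arXiv:2011.03373 — 6 statements merged into one kernel-verified Lean document; each statement's English description precedes it below -/
import Mathlib

section
/- (Extension principle.) Let p be a prime and G = PSL(2,𝔽_p). Let h and r ≥ 1 be natural numbers and m₁,…,m_r ≥ 2 integers, and suppose there exist elements α₁,β₁,…,α_h,β_h and c₁,…,c_r of G such that orderOf(c_j) = m_j for every j, the ordered product ⁅α₁,β₁⁆⋯⁅α_h,β_h⁆·c₁⋯c_r equals 1, and all of these elements together generate G. Fix an index i, assume m_i = 2 or m_i is an odd prime, and assume c_i = u·v for some u, v ∈ G with orderOf(u) = orderOf(v) = m_i. Then there exist elements α'₁,β'₁,…,α'_h,β'_h and c'₁,…,c'_{r+1} of G whose orders are m₁,…,m_{i−1}, m_i, m_i, m_{i+1},…,m_r respectively, such that ⁅α'₁,β'₁⁆⋯⁅α'_h,β'_h⁆·c'₁⋯c'_{r+1} = 1 and all of these elements together generate G; that is, (h; m₁,…,m_{i−1}, m_i, m_i, m_{i+1},…, m_r) is also a signature of G. -/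
open scoped commutatorElement

private lemma insertNth_succ_eq_cons {β : Type*} {n : ℕ} (j : Fin (n + 1)) (x : β)
    (f : Fin (n + 1) → β) :
    Fin.insertNth (α := fun _ => β) j.succ x f =
      Fin.cons (f 0) (Fin.insertNth (α := fun _ => β) j x (f ∘ Fin.succ)) := by
  funext k
  refine Fin.cases ?_ (fun k' => ?_) k
  · have h0 : (0 : Fin (n + 2)) = j.succ.succAbove 0 := (Fin.succ_succAbove_zero j).symm
    rw [h0, Fin.insertNth_apply_succAbove]
    simp
  · simp only [Fin.cons_succ]
    refine Fin.succAboveCases j ?_ (fun l => ?_) k'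
    · rw [Fin.insertNth_apply_same, Fin.insertNth_apply_same]
    · rw [Fin.insertNth_apply_succAbove, ← Fin.succ_succAbove_succ,
        Fin.insertNth_apply_succAbove]
      rfl

private lemma prod_ofFn_insertNth {M : Type*} [Monoid M] :
    ∀ {n : ℕ} (f : Fin n → M) (j : Fin (n + 1)) (x : M),
      (List.ofFn (Fin.insertNth (α := fun _ => M) j x f)).prod =
        ((List.ofFn f).take j).prod * (x * ((List.ofFn f).drop j).prod) := by
  intro n
  induction n with
  | zero =>
    intro f j x
    have hj : j = 0 := Fin.fin_one_eq_zero j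
    subst hj
    simp [Fin.insertNth_zero']
  | succ n ih =>
    intro f j x
    refine Fin.cases ?_ (fun j' => ?_) j
    · simp [Fin.insertNth_zero']
    · rw [insertNth_succ_eq_cons]
      have : List.ofFn (Fin.cons (α := fun _ => M) (f 0)
          (Fin.insertNth (α := fun _ => M) j' x (f ∘ Fin.succ))) =
          f 0 :: List.ofFn (Fin.insertNth (α := fun _ => M) j' x (f ∘ Fin.succ)) := by
        rw [List.ofFn_succ]; simp
      rw [this, List.prod_cons, ih (f ∘ Fin.succ) j' x, List.ofFn_succ]
      have hc : ((j'.succ : Fin (n + 2)) : ℕ) = (j' : ℕ) + 1 := rfl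
      rw [hc, List.take_succ_cons, List.drop_succ_cons, List.prod_cons]
      simp only [Function.comp_def, mul_assoc]

/-- **Extension principle.**  Let `G = PSL(2, 𝔽_p)` for a prime `p`.  Suppose `G` has a
generating vector of type `(h; m₁,…,m_r)` (witnessed by `α, β, c`), that `m i = 2` or `m i`
is an odd prime, and that `c i = u * v` with `orderOf u = orderOf v = m i`.  Then `G` also
has a generating vector of type `(h; m₁,…,m_{i-1}, m i, m i, m_{i+1},…,m_r)`, i.e. with the
period `m i` repeated once more (the new tuple of periods being `Fin.insertNth i.castSucc
(m i) m`). -/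
theorem extension_principle (p : ℕ) [Fact p.Prime]
    (h r : ℕ) (hr : 1 ≤ r) (m : Fin r → ℕ) (hm : ∀ j, 2 ≤ m j)
    (i : Fin r) (hmi : m i = 2 ∨ ((m i).Prime ∧ Odd (m i)))
    (α β : Fin h → Matrix.ProjectiveSpecialLinearGroup (Fin 2) (ZMod p))
    (c : Fin r → Matrix.ProjectiveSpecialLinearGroup (Fin 2) (ZMod p))
    (hord : ∀ j, orderOf (c j) = m j)
    (hprod : (List.ofFn fun k => ⁅α k, β k⁆).prod * (List.ofFn c).prod = 1)
    (hgen : Subgroup.closure (Set.range α ∪ Set.range β ∪ Set.range c) = ⊤)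
    (u v : Matrix.ProjectiveSpecialLinearGroup (Fin 2) (ZMod p))
    (huv : c i = u * v) (hu : orderOf u = m i) (hv : orderOf v = m i) :
    ∃ (α' β' : Fin h → Matrix.ProjectiveSpecialLinearGroup (Fin 2) (ZMod p))
      (c' : Fin (r + 1) → Matrix.ProjectiveSpecialLinearGroup (Fin 2) (ZMod p)),
      (∀ j, orderOf (c' j) = (Fin.insertNth i.castSucc (m i) m : Fin (r + 1) → ℕ) j) ∧
      (List.ofFn fun k => ⁅α' k, β' k⁆).prod * (List.ofFn c').prod = 1 ∧
      Subgroup.closure (Set.range α' ∪ Set.range β' ∪ Set.range c') = ⊤ := by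
  classical
  set d := Function.update c i v with hd
  refine ⟨α, β, Fin.insertNth i.castSucc u d, ?_, ?_, ?_⟩
  · intro j
    refine Fin.succAboveCases i.castSucc ?_ (fun l => ?_) j
    · rw [Fin.insertNth_apply_same, Fin.insertNth_apply_same, hu]
    · rw [Fin.insertNth_apply_succAbove, Fin.insertNth_apply_succAbove]
      by_cases hl : l = i
      · subst hl; simp [hd, hv]
      · simp [hd, Function.update_of_ne hl, hord]
  · -- product
    have key : (List.ofFn (Fin.insertNth i.castSucc u d)).prod = (List.ofFn c).prod := by
      rw [prod_ofFn_insertNth]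
      have hci : ((i.castSucc : Fin (r + 1)) : ℕ) = (i : ℕ) := rfl
      rw [hci]
      have hlen : (i : ℕ) < (List.ofFn d).length := by simp [i.isLt]
      have hlenc : (i : ℕ) < (List.ofFn c).length := by simp [i.isLt]
      have htake : (List.ofFn d).take i = (List.ofFn c).take i := by
        apply List.ext_getElem
        · simp
        · intro k h1 h2
          have hk : k < (i : ℕ) := by
            simpa using h1
          have : k ≠ (i : ℕ) := Nat.ne_of_lt hk
          simp only [List.getElem_take, List.getElem_ofFn]
          simp [hd, Function.update_apply, Fin.ext_iff, this]
      have hdrop : (List.ofFn d).drop ((i : ℕ) + 1) = (List.ofFn c).drop ((i : ℕ) + 1) := by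
        apply List.ext_getElem
        · simp
        · intro k h1 h2
          have : (i : ℕ) + 1 + k ≠ (i : ℕ) := by omega
          simp only [List.getElem_drop, List.getElem_ofFn]
          simp [hd, Function.update_apply, Fin.ext_iff, this]
      have hdv : (List.ofFn d)[(i : ℕ)] = v := by simp [hd]
      have hcc : (List.ofFn c)[(i : ℕ)] = c i := by simp
      rw [← List.cons_getElem_drop_succ (h := hlen), List.prod_cons, hdv, hdrop, htake]
      rw [← mul_assoc u v, ← huv, ← hcc, ← List.prod_cons,
        List.cons_getElem_drop_succ (h := hlenc), List.prod_take_mul_prod_drop]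
    rw [key]; exact hprod
  · rw [eq_top_iff, ← hgen]
    refine (Subgroup.closure_le _).2 ?_
    rintro x (hx | hx)
    · exact Subgroup.subset_closure (Or.inl hx)
    · obtain ⟨j, rfl⟩ := hx
      by_cases hj : j = i
      · have hu' : u ∈ Subgroup.closure (Set.range α ∪ Set.range β ∪
            Set.range (Fin.insertNth i.castSucc u d)) := by
          refine Subgroup.subset_closure (Or.inr ⟨i.castSucc, ?_⟩)
          rw [Fin.insertNth_apply_same]
        have hv' : v ∈ Subgroup.closure (Set.range α ∪ Set.range β ∪
            Set.range (Fin.insertNth i.castSucc u d)) := by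
          refine Subgroup.subset_closure (Or.inr ⟨i.castSucc.succAbove i, ?_⟩)
          rw [Fin.insertNth_apply_succAbove]
          simp [hd]
        rw [hj, huv]
        exact mul_mem hu' hv'
      · refine Subgroup.subset_closure (Or.inr ⟨i.castSucc.succAbove j, ?_⟩)
        rw [Fin.insertNth_apply_succAbove]
        simp [hd, Function.update_of_ne hj]
end

section
/- For every natural number h ≥ 2 and all natural numbers a₂, a₃, a₄, a₇ ≥ 0, the group G = PSL(2,𝔽₇) admits a generating vector of type (h; 2^[a₂], 3^[a₃], 4^[a₄], 7^[a₇]); that is, every tuple (h; 2^[a₂],3^[a₃],4^[a₄],7^[a₇]) with h ≥ 2 is a signature of PSL(2,𝔽₇). -/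
open Matrix

open scoped commutatorElement

/-- `GenVector G h periods` says that the group `G` admits a generating vector of type
`(h; periods)`. -/
def GenVector (G : Type) [Group G] (h : ℕ) (periods : List ℕ) : Prop :=
  ∃ (α β : Fin h → G) (c : Fin periods.length → G),
    (∀ j, orderOf (c j) = periods.get j) ∧
    ((List.ofFn fun i => ⁅α i, β i⁆).prod * (List.ofFn c).prod = 1) ∧
    Subgroup.closure (Set.range α ∪ Set.range β ∪ Set.range c) = ⊤

/-- The period list `2^[a₂], 3^[a₃], 4^[a₄], 7^[a₇]`. -/
def periods7 (a₂ a₃ a₄ a₇ : ℕ) : List ℕ :=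
  List.replicate a₂ 2 ++ List.replicate a₃ 3 ++ List.replicate a₄ 4 ++ List.replicate a₇ 7

abbrev SL7 := Matrix.SpecialLinearGroup (Fin 2) (ZMod 7)

instance : Fact (Nat.Prime 7) := ⟨by norm_num⟩

instance : DecidableEq SL7 :=
  inferInstanceAs (DecidableEq {A : Matrix (Fin 2) (Fin 2) (ZMod 7) // A.det = 1})

def MA : SL7 := ⟨!![1,1;0,1], by decide⟩
def MB : SL7 := ⟨!![0,6;1,0], by decide⟩

def uu (t : ZMod 7) : SL7 := ⟨!![1, t; 0, 1], by simp [Matrix.det_fin_two_of]⟩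

lemma uu_mul (s t : ZMod 7) : uu s * uu t = uu (s + t) := by
  apply Matrix.SpecialLinearGroup.ext
  intro i j
  simp only [Matrix.SpecialLinearGroup.coe_mul]
  fin_cases i <;> fin_cases j <;>
    simp [uu, Matrix.SpecialLinearGroup.coe_mul, Matrix.mul_apply, Fin.sum_univ_two] <;> ring

lemma pow_MA (n : ℕ) : MA ^ n = uu n := by
  induction n with
  | zero => apply Subtype.ext; ext i j; fin_cases i <;> fin_cases j <;> simp [uu]
  | succ k ih =>
      rw [pow_succ, ih, show MA = uu 1 from rfl, uu_mul]
      push_cast; ring_nf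

lemma uu_eq_pow (t : ZMod 7) : uu t = MA ^ t.val := by
  rw [pow_MA, ZMod.natCast_rightInverse t]

lemma bruhat (M : SL7) (hc : M.1 1 0 ≠ 0) :
    M = uu ((M.1 0 0 + 1) * (M.1 1 0)⁻¹) * MB * uu (M.1 1 0) * MB *
        uu ((M.1 1 1 + 1) * (M.1 1 0)⁻¹) := by
  have hdet : M.1 0 0 * M.1 1 1 - M.1 0 1 * M.1 1 0 = 1 := by
    have h2 := M.2
    rwa [Matrix.det_fin_two] at h2
  apply Matrix.SpecialLinearGroup.ext
  intro i j
  simp only [Matrix.SpecialLinearGroup.coe_mul]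
  fin_cases i <;> fin_cases j <;>
    · simp only [uu, MB, Matrix.SpecialLinearGroup.coe_mul, Matrix.mul_apply,
        Fin.sum_univ_two, Matrix.cons_val', Matrix.cons_val_zero, Matrix.cons_val_one,
        Matrix.head_cons, Matrix.head_fin_const, Matrix.empty_val', Matrix.cons_val_fin_one,
        Matrix.of_apply, Matrix.cons_val, Fin.zero_eta, Fin.mk_one, Fin.isValue]
      try field_simp
      try ring_nf
      try simp only [show (7:ZMod 7) = 0 by decide, show (13:ZMod 7) = -1 by decide,
        mul_zero, add_zero, zero_add, zero_mul, mul_neg, neg_mul]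
      all_goals first
        | linear_combination -hdet
        | linear_combination (-M.1 1 0) * hdet

lemma SL_gen : Subgroup.closure ({MA, MB} : Set SL7) = ⊤ := by
  rw [Subgroup.eq_top_iff']
  set H := Subgroup.closure ({MA, MB} : Set SL7) with hH
  have hA : MA ∈ H := Subgroup.subset_closure (by simp)
  have hB : MB ∈ H := Subgroup.subset_closure (by simp)
  have hu : ∀ t : ZMod 7, uu t ∈ H := fun t => uu_eq_pow t ▸ pow_mem hA _
  have key : ∀ M : SL7, M.1 1 0 ≠ 0 → M ∈ H := by
    intro M hc
    rw [bruhat M hc]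
    exact mul_mem (mul_mem (mul_mem (mul_mem (hu _) hB) (hu _)) hB) (hu _)
  intro M
  by_cases hc : M.1 1 0 = 0
  · have h2 : (MB * M).1 1 0 ≠ 0 := by
      have hdet : M.1 0 0 * M.1 1 1 - M.1 0 1 * M.1 1 0 = 1 := by
        have h2 := M.2; rwa [Matrix.det_fin_two] at h2
      have he : (MB * M).1 1 0 = M.1 0 0 := by
        rw [show (MB * M).1 = MB.1 * M.1 from rfl]
        simp [MB, Matrix.SpecialLinearGroup.coe_mul, Matrix.mul_apply, Fin.sum_univ_two]
      rw [he]
      intro h0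
      rw [h0, hc] at hdet
      simp at hdet
    have : M = MB⁻¹ * (MB * M) := by group
    rw [this]
    exact mul_mem (inv_mem hB) (key _ h2)
  · exact key M hc

abbrev G7 := Matrix.ProjectiveSpecialLinearGroup (Fin 2) (ZMod 7)

def f : SL7 →* G7 := QuotientGroup.mk' (Subgroup.center SL7)

def MX : SL7 := ⟨!![0,3;2,0], by decide⟩
def MY : SL7 := ⟨!![2,0;0,4], by decide⟩
def MZ : SL7 := ⟨!![0,2;3,3], by decide⟩

def P0000 : SL7 := ⟨!![0,1;6,0], by decide⟩
def Q0000 : SL7 := ⟨!![0,3;2,5], by decide⟩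
def P0001 : SL7 := ⟨!![0,2;3,0], by decide⟩
def Q0001 : SL7 := ⟨!![1,2;0,1], by decide⟩
def P0010 : SL7 := ⟨!![0,1;6,0], by decide⟩
def Q0010 : SL7 := ⟨!![0,3;2,3], by decide⟩
def P0011 : SL7 := ⟨!![2,0;3,4], by decide⟩
def Q0011 : SL7 := ⟨!![0,2;3,2], by decide⟩
def P0100 : SL7 := ⟨!![0,3;2,0], by decide⟩
def Q0100 : SL7 := ⟨!![1,3;2,0], by decide⟩
def P0101 : SL7 := ⟨!![0,1;6,0], by decide⟩
def Q0101 : SL7 := ⟨!![2,3;2,0], by decide⟩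
def P0110 : SL7 := ⟨!![0,2;3,0], by decide⟩
def Q0110 : SL7 := ⟨!![0,1;6,4], by decide⟩
def P0111 : SL7 := ⟨!![1,0;6,1], by decide⟩
def Q0111 : SL7 := ⟨!![0,2;3,4], by decide⟩
def P1000 : SL7 := ⟨!![0,3;2,0], by decide⟩
def Q1000 : SL7 := ⟨!![1,2;3,0], by decide⟩
def P1001 : SL7 := ⟨!![0,2;3,0], by decide⟩
def Q1001 : SL7 := ⟨!![2,3;4,3], by decide⟩
def P1010 : SL7 := ⟨!![0,1;6,0], by decide⟩
def Q1010 : SL7 := ⟨!![2,3;2,0], by decide⟩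
def P1011 : SL7 := ⟨!![1,0;4,1], by decide⟩
def Q1011 : SL7 := ⟨!![0,1;6,1], by decide⟩
def P1100 : SL7 := ⟨!![0,2;3,0], by decide⟩
def Q1100 : SL7 := ⟨!![1,3;3,3], by decide⟩
def P1101 : SL7 := ⟨!![0,1;6,0], by decide⟩
def Q1101 : SL7 := ⟨!![1,2;2,5], by decide⟩
def P1110 : SL7 := ⟨!![0,2;3,0], by decide⟩
def Q1110 : SL7 := ⟨!![1,2;0,1], by decide⟩
def P1111 : SL7 := ⟨!![2,0;3,4], by decide⟩
def Q1111 : SL7 := ⟨!![2,3;6,6], by decide⟩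

lemma fone {M : SL7} (hM : M = 1) : f M = 1 := by rw [hM, _root_.map_one]

lemma fneg : f (-1) = 1 := by
  have hc : (-1 : SL7) ∈ Subgroup.center SL7 := by
    rw [Matrix.SpecialLinearGroup.mem_center_iff]
    exact ⟨-1, by norm_num, by decide⟩
  exact (QuotientGroup.eq_one_iff _).mpr hc

lemma not_one {M : SL7} (g : SL7) (hg : g * M ≠ M * g) : f M ≠ 1 := by
  intro h1
  have := (QuotientGroup.eq_one_iff M).mp h1
  exact hg (Subgroup.mem_center_iff.mp this g)

lemma order_fMX : orderOf (f MX) = 2 := by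
  apply orderOf_eq_prime
  · rw [← map_pow, show MX ^ 2 = -1 by decide, fneg]
  · exact not_one MA (by decide)

lemma order_fMY : orderOf (f MY) = 3 := by
  apply orderOf_eq_prime
  · rw [← map_pow, show MY ^ 3 = 1 by decide, _root_.map_one]
  · exact not_one MA (by decide)

lemma order_fMA : orderOf (f MA) = 7 := by
  apply orderOf_eq_prime
  · rw [← map_pow, show MA ^ 7 = 1 by decide, _root_.map_one]
  · exact not_one MB (by decide)

lemma order_fMZ : orderOf (f MZ) = 4 := by
  have h4 : orderOf (f MZ) = 2 ^ (1 + 1) := by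
    apply orderOf_eq_prime_pow
    · rw [pow_one, ← map_pow, show MZ ^ 2 = MZ * MZ from sq MZ]
      exact not_one MA (by decide)
    · rw [← map_pow, show MZ ^ 2 ^ (1+1) = -1 by decide, fneg]
  rw [h4]; norm_num

lemma PSL_gen : Subgroup.closure ({f MA, f MB} : Set G7) = ⊤ := by
  have h1 : Subgroup.map f ⊤ = ⊤ :=
    Subgroup.map_top_of_surjective f (QuotientGroup.mk'_surjective _)
  rw [← SL_gen, MonoidHom.map_closure, Set.image_insert_eq, Set.image_singleton] at h1
  exact h1

/-- alternating block -/
def altL {G : Type*} [Group G] (g : G) (n : ℕ) : List G :=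
  List.ofFn (fun j : Fin n => if (j : ℕ) % 2 = 0 then g else g⁻¹)

lemma altL_length {G : Type*} [Group G] (g : G) (n : ℕ) : (altL g n).length = n := by
  simp [altL]

lemma altL_map_orderOf {G : Type*} [Group G] (g : G) (n : ℕ) :
    (altL g n).map orderOf = List.replicate n (orderOf g) := by
  rw [altL, List.map_ofFn]
  have he : (orderOf ∘ fun j : Fin n => if (j : ℕ) % 2 = 0 then g else g⁻¹) =
      fun _ => orderOf g := by
    funext j
    by_cases hj : (j : ℕ) % 2 = 0 <;> simp [hj, orderOf_inv]
  rw [he, List.ofFn_const]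

lemma altL_prod {G : Type*} [Group G] (g : G) (n : ℕ) :
    (altL g n).prod = if n % 2 = 0 then 1 else g := by
  induction n with
  | zero => simp [altL]
  | succ k ih =>
      rw [altL, List.ofFn_succ', List.concat_eq_append, List.prod_append]
      have h1 : (List.ofFn fun i : Fin k =>
          if ((Fin.castSucc i : Fin (k+1)) : ℕ) % 2 = 0 then g else g⁻¹) = altL g k := by
        simp [altL]
      rw [h1, ih]
      rcases Nat.mod_two_eq_zero_or_one k with hk | hk
      · have hk1 : (k + 1) % 2 = 1 := by omega
        simp [hk, hk1, Fin.val_last]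
      · have hk1 : (k + 1) % 2 = 0 := by omega
        simp [hk, hk1, Fin.val_last]

lemma ofFn_get_cast {α : Type*} (l : List α) {n : ℕ} (h : l.length = n) :
    List.ofFn (fun j : Fin n => l.get (Fin.cast h.symm j)) = l := by
  subst h
  exact List.ofFn_get l

lemma master (h a₂ a₃ a₄ a₇ : ℕ) (hh : 2 ≤ h) (β₁ β₂ : G7)
    (hid : ⁅f MA, β₁⁆ * ⁅f MB, β₂⁆ *
      ((if a₂ % 2 = 0 then 1 else f MX) * ((if a₃ % 2 = 0 then 1 else f MY) *
       ((if a₄ % 2 = 0 then 1 else f MZ) * (if a₇ % 2 = 0 then 1 else f MA)))) = 1) :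
    GenVector G7 h (periods7 a₂ a₃ a₄ a₇) := by
  obtain ⟨k, rfl⟩ : ∃ k, h = k + 2 := ⟨h - 2, by omega⟩
  set Lc : List G7 := altL (f MX) a₂ ++ altL (f MY) a₃ ++ altL (f MZ) a₄ ++ altL (f MA) a₇
    with hLc
  have hlen : Lc.length = (periods7 a₂ a₃ a₄ a₇).length := by
    simp [hLc, altL_length, periods7]
  have horders : Lc.map orderOf = periods7 a₂ a₃ a₄ a₇ := by
    simp only [hLc, List.map_append, altL_map_orderOf, order_fMX, order_fMY, order_fMZ,
      order_fMA, periods7]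
  have hprod : Lc.prod =
      (if a₂ % 2 = 0 then 1 else f MX) * ((if a₃ % 2 = 0 then 1 else f MY) *
       ((if a₄ % 2 = 0 then 1 else f MZ) * (if a₇ % 2 = 0 then 1 else f MA))) := by
    simp [hLc, List.prod_append, altL_prod, mul_assoc]
  refine ⟨Fin.cons (f MA) (Fin.cons (f MB) fun _ => 1),
          Fin.cons β₁ (Fin.cons β₂ fun _ => 1),
          fun j => Lc.get (Fin.cast hlen.symm j), ?_, ?_, ?_⟩
  · intro j
    have h2 : (periods7 a₂ a₃ a₄ a₇).get j = (List.map orderOf Lc)[(j : ℕ)]'(by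
        rw [horders]; exact j.isLt) := by
      simp only [List.get_eq_getElem]
      congr 1
      exact horders.symm
    rw [h2, List.getElem_map]
    simp [List.get_eq_getElem, Fin.coe_cast]
  · have hc : (List.ofFn fun j : Fin (periods7 a₂ a₃ a₄ a₇).length =>
        Lc.get (Fin.cast hlen.symm j)).prod = Lc.prod := by
      rw [ofFn_get_cast Lc hlen]
    rw [hc, hprod]
    have hcomm : (List.ofFn fun i : Fin (k + 2) =>
        ⁅(Fin.cons (f MA) (Fin.cons (f MB) fun _ => (1 : G7)) : Fin (k+2) → G7) i,
         (Fin.cons β₁ (Fin.cons β₂ fun _ => (1 : G7)) : Fin (k+2) → G7) i⁆).prod = ⁅f MA, β₁⁆ * ⁅f MB, β₂⁆ := by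
      rw [List.ofFn_succ, List.ofFn_succ]
      simp only [Fin.cons_zero, Fin.cons_succ, List.prod_cons]
      have hrest : (List.ofFn fun i : Fin k => ⁅(1 : G7), (1 : G7)⁆).prod = 1 := by
        simp [commutatorElement_def]
      simp [hrest, mul_assoc]
    rw [hcomm, mul_assoc] at *
    rw [← mul_assoc]
    rw [mul_assoc ⁅f MA, β₁⁆]
    exact hid
  · have hsub : ({f MA, f MB} : Set G7) ⊆
        Set.range (Fin.cons (f MA) (Fin.cons (f MB) fun _ => (1:G7)) : Fin (k+2) → G7) ∪
        Set.range (Fin.cons β₁ (Fin.cons β₂ fun _ => (1:G7)) : Fin (k+2) → G7) ∪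
        Set.range (fun j => Lc.get (Fin.cast hlen.symm j)) := by
      intro g hg
      rcases hg with rfl | hg
      · exact Or.inl (Or.inl ⟨0, by simp⟩)
      · rcases hg with rfl
        refine Or.inl (Or.inl ⟨1, ?_⟩)
        have h1 : (1 : Fin (k + 2)) = Fin.succ 0 := by
          ext; simp
        rw [h1, Fin.cons_succ, Fin.cons_zero]
    have := Subgroup.closure_mono hsub
    rw [PSL_gen] at this
    exact top_le_iff.mp this

theorem higher_genus_signatures_PSL2_F7 (h a₂ a₃ a₄ a₇ : ℕ) (hh : 2 ≤ h) :
    GenVector (Matrix.ProjectiveSpecialLinearGroup (Fin 2) (ZMod 7)) h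
      (periods7 a₂ a₃ a₄ a₇) := by
  rcases Nat.mod_two_eq_zero_or_one a₂ with h2 | h2
  · rcases Nat.mod_two_eq_zero_or_one a₃ with h3 | h3
    · rcases Nat.mod_two_eq_zero_or_one a₄ with h4 | h4
      · rcases Nat.mod_two_eq_zero_or_one a₇ with h7 | h7
        · exact master h a₂ a₃ a₄ a₇ hh (f P0000) (f Q0000) (by
            simp only [h2, h3, h4, h7]
            simp only [if_pos rfl, one_ne_zero, if_neg, reduceIte, one_mul, mul_one]
            simp only [← map_commutatorElement, ← _root_.map_mul]
            exact fone (by decide))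
        · exact master h a₂ a₃ a₄ a₇ hh (f P0001) (f Q0001) (by
            simp only [h2, h3, h4, h7]
            simp only [if_pos rfl, one_ne_zero, if_neg, reduceIte, one_mul, mul_one]
            simp only [← map_commutatorElement, ← _root_.map_mul]
            exact fone (by decide))
      · rcases Nat.mod_two_eq_zero_or_one a₇ with h7 | h7
        · exact master h a₂ a₃ a₄ a₇ hh (f P0010) (f Q0010) (by
            simp only [h2, h3, h4, h7]
            simp only [if_pos rfl, one_ne_zero, if_neg, reduceIte, one_mul, mul_one]
            simp only [← map_commutatorElement, ← _root_.map_mul]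
            exact fone (by decide))
        · exact master h a₂ a₃ a₄ a₇ hh (f P0011) (f Q0011) (by
            simp only [h2, h3, h4, h7]
            simp only [if_pos rfl, one_ne_zero, if_neg, reduceIte, one_mul, mul_one]
            simp only [← map_commutatorElement, ← _root_.map_mul]
            exact fone (by decide))
    · rcases Nat.mod_two_eq_zero_or_one a₄ with h4 | h4
      · rcases Nat.mod_two_eq_zero_or_one a₇ with h7 | h7
        · exact master h a₂ a₃ a₄ a₇ hh (f P0100) (f Q0100) (by
            simp only [h2, h3, h4, h7]
            simp only [if_pos rfl, one_ne_zero, if_neg, reduceIte, one_mul, mul_one]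
            simp only [← map_commutatorElement, ← _root_.map_mul]
            exact fone (by decide))
        · exact master h a₂ a₃ a₄ a₇ hh (f P0101) (f Q0101) (by
            simp only [h2, h3, h4, h7]
            simp only [if_pos rfl, one_ne_zero, if_neg, reduceIte, one_mul, mul_one]
            simp only [← map_commutatorElement, ← _root_.map_mul]
            exact fone (by decide))
      · rcases Nat.mod_two_eq_zero_or_one a₇ with h7 | h7
        · exact master h a₂ a₃ a₄ a₇ hh (f P0110) (f Q0110) (by
            simp only [h2, h3, h4, h7]
            simp only [if_pos rfl, one_ne_zero, if_neg, reduceIte, one_mul, mul_one]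
            simp only [← map_commutatorElement, ← _root_.map_mul]
            exact fone (by decide))
        · exact master h a₂ a₃ a₄ a₇ hh (f P0111) (f Q0111) (by
            simp only [h2, h3, h4, h7]
            simp only [if_pos rfl, one_ne_zero, if_neg, reduceIte, one_mul, mul_one]
            simp only [← map_commutatorElement, ← _root_.map_mul]
            exact fone (by decide))
  · rcases Nat.mod_two_eq_zero_or_one a₃ with h3 | h3
    · rcases Nat.mod_two_eq_zero_or_one a₄ with h4 | h4
      · rcases Nat.mod_two_eq_zero_or_one a₇ with h7 | h7
        · exact master h a₂ a₃ a₄ a₇ hh (f P1000) (f Q1000) (by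
            simp only [h2, h3, h4, h7]
            simp only [if_pos rfl, one_ne_zero, if_neg, reduceIte, one_mul, mul_one]
            simp only [← map_commutatorElement, ← _root_.map_mul]
            exact fone (by decide))
        · exact master h a₂ a₃ a₄ a₇ hh (f P1001) (f Q1001) (by
            simp only [h2, h3, h4, h7]
            simp only [if_pos rfl, one_ne_zero, if_neg, reduceIte, one_mul, mul_one]
            simp only [← map_commutatorElement, ← _root_.map_mul]
            exact fone (by decide))
      · rcases Nat.mod_two_eq_zero_or_one a₇ with h7 | h7
        · exact master h a₂ a₃ a₄ a₇ hh (f P1010) (f Q1010) (by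
            simp only [h2, h3, h4, h7]
            simp only [if_pos rfl, one_ne_zero, if_neg, reduceIte, one_mul, mul_one]
            simp only [← map_commutatorElement, ← _root_.map_mul]
            exact fone (by decide))
        · exact master h a₂ a₃ a₄ a₇ hh (f P1011) (f Q1011) (by
            simp only [h2, h3, h4, h7]
            simp only [if_pos rfl, one_ne_zero, if_neg, reduceIte, one_mul, mul_one]
            simp only [← map_commutatorElement, ← _root_.map_mul]
            exact fone (by decide))
    · rcases Nat.mod_two_eq_zero_or_one a₄ with h4 | h4
      · rcases Nat.mod_two_eq_zero_or_one a₇ with h7 | h7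
        · exact master h a₂ a₃ a₄ a₇ hh (f P1100) (f Q1100) (by
            simp only [h2, h3, h4, h7]
            simp only [if_pos rfl, one_ne_zero, if_neg, reduceIte, one_mul, mul_one]
            simp only [← map_commutatorElement, ← _root_.map_mul]
            exact fone (by decide))
        · exact master h a₂ a₃ a₄ a₇ hh (f P1101) (f Q1101) (by
            simp only [h2, h3, h4, h7]
            simp only [if_pos rfl, one_ne_zero, if_neg, reduceIte, one_mul, mul_one]
            simp only [← map_commutatorElement, ← _root_.map_mul]
            exact fone (by decide))
      · rcases Nat.mod_two_eq_zero_or_one a₇ with h7 | h7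
        · exact master h a₂ a₃ a₄ a₇ hh (f P1110) (f Q1110) (by
            simp only [h2, h3, h4, h7]
            simp only [if_pos rfl, one_ne_zero, if_neg, reduceIte, one_mul, mul_one]
            simp only [← map_commutatorElement, ← _root_.map_mul]
            exact fone (by decide))
        · exact master h a₂ a₃ a₄ a₇ hh (f P1111) (f Q1111) (by
            simp only [h2, h3, h4, h7]
            simp only [if_pos rfl, one_ne_zero, if_neg, reduceIte, one_mul, mul_one]
            simp only [← map_commutatorElement, ← _root_.map_mul]
            exact fone (by decide))
end

section
/- For every natural number h ≥ 2 and all natural numbers a₂, a₃, a₅, a₆, a₁₁ ≥ 0, the group G = PSL(2,𝔽₁₁) admits a generating vector of type (h; 2^[a₂], 3^[a₃], 5^[a₅], 6^[a₆], 11^[a₁₁]); that is, every tuple (h; 2^[a₂],3^[a₃],5^[a₅],6^[a₆],11^[a₁₁]) with h ≥ 2 is a signature of PSL(2,𝔽₁₁). -/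
open scoped commutatorElement

/-- The period list `2^[a₂], 3^[a₃], 5^[a₅], 6^[a₆], 11^[a₁₁]`. -/
def periods11 (a₂ a₃ a₅ a₆ a₁₁ : ℕ) : List ℕ :=
  List.replicate a₂ 2 ++ List.replicate a₃ 3 ++ List.replicate a₅ 5 ++
    List.replicate a₆ 6 ++ List.replicate a₁₁ 11

open Matrix

instance : Fact (Nat.Prime 5) := ⟨by norm_num⟩
instance : Fact (Nat.Prime 11) := ⟨by norm_num⟩

abbrev SL2 := Matrix.SpecialLinearGroup (Fin 2) (ZMod 11)
abbrev PSL2 := Matrix.ProjectiveSpecialLinearGroup (Fin 2) (ZMod 11)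

/-- alternating list g, g⁻¹, g, g⁻¹, ... of length n -/
def altList {G : Type} [Group G] (g : G) : ℕ → List G
  | 0 => []
  | 1 => [g]
  | (n+2) => g :: g⁻¹ :: altList g n

lemma altList_prod {G : Type} [Group G] (g : G) :
    ∀ n, (altList g n).prod = if Even n then 1 else g
  | 0 => by simp [altList]
  | 1 => by simp [altList, Nat.not_even_one]
  | (n+2) => by
      rw [altList, List.prod_cons, List.prod_cons, ← mul_assoc, mul_inv_cancel, one_mul,
        altList_prod g n]
      simp [Nat.even_add]

lemma forall₂_altList {G : Type} [Group G] (g : G) (m : ℕ) (hg : orderOf g = m) :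
    ∀ n, List.Forall₂ (fun (e : G) (k : ℕ) => orderOf e = k) (altList g n)
      (List.replicate n m)
  | 0 => List.Forall₂.nil
  | 1 => List.Forall₂.cons hg List.Forall₂.nil
  | (n+2) => List.Forall₂.cons hg
      (List.Forall₂.cons (by rw [orderOf_inv]; exact hg) (forall₂_altList g m hg n))

lemma genAux {G : Type} [Group G] {A B x y z v w : G} (k a₂ a₃ a₅ a₆ a₁₁ : ℕ) (X Y : G)
    (hx : orderOf x = 2) (hy : orderOf y = 3) (hz : orderOf z = 5)
    (hv : orderOf v = 6) (hw : orderOf w = 11)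
    (hgen : Subgroup.closure ({A, B} : Set G) = ⊤)
    (hc : ⁅A, B⁆ * (⁅X, Y⁆ * ((altList x a₂).prod * ((altList y a₃).prod *
      ((altList z a₅).prod * ((altList v a₆).prod * (altList w a₁₁).prod))))) = 1) :
    GenVector G (k + 2) (periods11 a₂ a₃ a₅ a₆ a₁₁) := by
  have hf : List.Forall₂ (fun (e : G) (k : ℕ) => orderOf e = k)
      (altList x a₂ ++ (altList y a₃ ++ (altList z a₅ ++ (altList v a₆ ++ altList w a₁₁))))
      (periods11 a₂ a₃ a₅ a₆ a₁₁) := by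
    unfold periods11
    rw [List.append_assoc, List.append_assoc, List.append_assoc]
    exact List.rel_append (forall₂_altList x 2 hx a₂) (List.rel_append (forall₂_altList y 3 hy a₃)
      (List.rel_append (forall₂_altList z 5 hz a₅)
        (List.rel_append (forall₂_altList v 6 hv a₆) (forall₂_altList w 11 hw a₁₁))))
  set cs : List G := altList x a₂ ++ (altList y a₃ ++ (altList z a₅ ++
    (altList v a₆ ++ altList w a₁₁))) with hcs
  have hlen : cs.length = (periods11 a₂ a₃ a₅ a₆ a₁₁).length := hf.length_eq
  set α' : Fin (k+2) → G := Fin.cons A (Fin.cons X fun _ => 1) with hα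
  set β' : Fin (k+2) → G := Fin.cons B (Fin.cons Y fun _ => 1) with hβ
  refine ⟨α', β',
    fun j => cs.get ⟨j.1, by rw [hlen]; exact j.2⟩, fun j => hf.get _ _, ?_, ?_⟩
  · have h1 : List.ofFn (fun j : Fin (periods11 a₂ a₃ a₅ a₆ a₁₁).length =>
        cs.get ⟨j.1, by rw [hlen]; exact j.2⟩) = cs := by
      apply List.ext_get (by simp [hlen])
      intro n hn1 hn2
      simp [List.get_ofFn]
    rw [h1]
    have h2 : (List.ofFn fun i : Fin (k+2) => ⁅α' i, β' i⁆).prod = ⁅A, B⁆ * ⁅X, Y⁆ := by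
      rw [List.ofFn_succ, List.ofFn_succ]
      simp [hα, hβ, Fin.cons_succ, Fin.cons_zero, commutatorElement_def]
    rw [h2, hcs]
    simp only [List.prod_append]
    simpa [mul_assoc] using hc
  · rw [eq_top_iff, ← hgen]
    apply Subgroup.closure_mono
    intro g hg
    rcases hg with rfl | rfl
    · exact Or.inl (Or.inl ⟨0, rfl⟩)
    · exact Or.inl (Or.inr ⟨0, rfl⟩)


def M (a b c d : ZMod 11) (h : a*d - b*c = 1 := by decide) : SL2 :=
  ⟨!![a,b;c,d], by simp [Matrix.det_fin_two_of, h]⟩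

def Um (t : ZMod 11) : SL2 := ⟨!![1,t;0,1], by simp [Matrix.det_fin_two_of]⟩
def Lo (t : ZMod 11) : SL2 := ⟨!![1,0;t,1], by simp [Matrix.det_fin_two_of]⟩

def Tm : SL2 := Um 1
def Lm : SL2 := Lo 1

lemma Um_pow (n : ℕ) : Tm ^ n = Um (n : ZMod 11) := by
  induction n with
  | zero => apply Subtype.ext; simp [Um, Matrix.one_fin_two]
  | succ n ih =>
      rw [pow_succ, ih]
      apply Subtype.ext
      show (Um (n : ZMod 11)).val * (Um 1).val = _
      push_cast
      simp [Um, Matrix.mul_fin_two, add_comm]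

lemma Lo_pow (n : ℕ) : Lm ^ n = Lo (n : ZMod 11) := by
  induction n with
  | zero => apply Subtype.ext; simp [Lo, Matrix.one_fin_two]
  | succ n ih =>
      rw [pow_succ, ih]
      apply Subtype.ext
      show (Lo (n : ZMod 11)).val * (Lo 1).val = _
      push_cast
      simp [Lo, Matrix.mul_fin_two, add_comm]

lemma SL2_gen : Subgroup.closure ({Tm, Lm} : Set SL2) = ⊤ := by
  rw [eq_top_iff]
  set H := Subgroup.closure ({Tm, Lm} : Set SL2) with hH
  have hT : Tm ∈ H := Subgroup.subset_closure (by simp)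
  have hL : Lm ∈ H := Subgroup.subset_closure (by simp)
  have hU : ∀ t : ZMod 11, Um t ∈ H := by
    intro t
    have := pow_mem hT t.val
    rwa [Um_pow, ZMod.natCast_val, ZMod.cast_id] at this
  have hLo : ∀ t : ZMod 11, Lo t ∈ H := by
    intro t
    have := pow_mem hL t.val
    rwa [Lo_pow, ZMod.natCast_val, ZMod.cast_id] at this
  have key : ∀ A : SL2, A.val 1 0 ≠ 0 → A ∈ H := by
    intro A hc0
    obtain ⟨a, b, c, d, hA⟩ : ∃ a b c d, A.val = !![a,b;c,d] :=
      ⟨_, _, _, _, Matrix.eta_fin_two A.val⟩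
    have hdet : a * d - b * c = 1 := by
      have h2 := A.2
      rw [hA, Matrix.det_fin_two_of] at h2
      exact h2
    have hc : c ≠ 0 := by
      rw [hA] at hc0
      simpa using hc0
    have hkey : A = Um ((a - 1) * c⁻¹) * (Lo c * Um ((d - 1) * c⁻¹)) := by
      apply Subtype.ext
      show A.val = (Um _).val * ((Lo _).val * (Um _).val)
      rw [hA]
      simp only [Um, Lo, Matrix.mul_fin_two]
      ext i j
      fin_cases i <;> fin_cases j <;> simp <;> field_simp <;>
        first
          | linear_combination (0 : ZMod 11) * hdet
          | linear_combination hdet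
          | linear_combination -hdet
          | linear_combination c * hdet
          | linear_combination (-c) * hdet
    rw [hkey]
    exact mul_mem (hU _) (mul_mem (hLo _) (hU _))
  intro A _
  by_cases hc : A.val 1 0 ≠ 0
  · exact key A hc
  · push_neg at hc
    have ha : A.val 0 0 ≠ 0 := by
      intro h0
      have h2 := A.2
      rw [Matrix.det_fin_two] at h2
      rw [h0, hc] at h2
      simp at h2
    have h1 : (Lm * A).val 1 0 ≠ 0 := by
      have : (Lm * A).val 1 0 = A.val 0 0 + A.val 1 0 := by
        show (Lm.val * A.val) 1 0 = _
        simp [Lm, Lo, Matrix.mul_apply, Fin.sum_univ_two]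
      rw [this, hc, add_zero]
      exact ha
    have := mul_mem (inv_mem hL) (key _ h1)
    rwa [inv_mul_cancel_left] at this

def φ : SL2 →* PSL2 := QuotientGroup.mk' _

lemma phi_eq_one {A : SL2} (h : ∃ r : ZMod 11, r^2 = 1 ∧ Matrix.scalar (Fin 2) r = A.val) :
    φ A = 1 := by
  rw [show φ A = ((A : SL2) : PSL2) from rfl, QuotientGroup.eq_one_iff,
    Matrix.SpecialLinearGroup.mem_center_iff]
  simpa using h

lemma phi_ne_one {A : SL2} (h : A.val 0 1 ≠ 0 ∨ A.val 0 0 ≠ A.val 1 1) : φ A ≠ 1 := by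
  intro h1
  rw [show φ A = ((A : SL2) : PSL2) from rfl, QuotientGroup.eq_one_iff,
    Matrix.SpecialLinearGroup.mem_center_iff] at h1
  obtain ⟨r, -, hr⟩ := h1
  rcases h with h | h
  · exact h (by rw [← hr]; simp)
  · exact h (by rw [← hr]; simp)

lemma PSL2_gen : Subgroup.closure ({φ Tm, φ Lm} : Set PSL2) = ⊤ := by
  have h1 : (Subgroup.closure ({Tm, Lm} : Set SL2)).map φ =
      Subgroup.closure (φ '' {Tm, Lm}) := MonoidHom.map_closure φ _
  rw [SL2_gen] at h1
  rw [Subgroup.map_top_of_surjective φ (QuotientGroup.mk'_surjective _)] at h1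
  rw [show ({φ Tm, φ Lm} : Set PSL2) = φ '' {Tm, Lm} by simp [Set.image_insert_eq], ← h1]

lemma ord_x : orderOf (φ (M 0 1 10 0)) = 2 := by
  apply orderOf_eq_prime
  · rw [← map_pow]; exact phi_eq_one (by decide)
  · exact phi_ne_one (by decide)

lemma ord_y : orderOf (φ (M 0 1 10 10)) = 3 := by
  apply orderOf_eq_prime
  · rw [← map_pow]; exact phi_eq_one (by decide)
  · exact phi_ne_one (by decide)

lemma ord_z : orderOf (φ (M 3 0 0 4)) = 5 := by
  apply orderOf_eq_prime
  · rw [← map_pow]; exact phi_eq_one (by decide)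
  · exact phi_ne_one (by decide)

lemma ord_w : orderOf (φ Tm) = 11 := by
  apply orderOf_eq_prime
  · rw [← map_pow]; exact phi_eq_one (by decide)
  · exact phi_ne_one (by decide)

lemma ord_v : orderOf (φ (M 0 1 10 5)) = 6 := by
  apply orderOf_eq_of_pow_and_pow_div_prime (by norm_num)
  · rw [← map_pow]; exact phi_eq_one (by decide)
  · intro p hp hdvd
    have hle : p ≤ 6 := Nat.le_of_dvd (by norm_num) hdvd
    have h2 := hp.two_le
    interval_cases p
    · rw [show (6/2 : ℕ) = 3 from rfl, ← map_pow]; exact phi_ne_one (by decide)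
    · rw [show (6/3 : ℕ) = 2 from rfl, ← map_pow]; exact phi_ne_one (by decide)
    · exact absurd hp (by norm_num)
    · exact absurd hdvd (by norm_num)
    · exact absurd hp (by norm_num)

theorem higher_genus_signatures_PSL2_F11 (h a₂ a₃ a₅ a₆ a₁₁ : ℕ) (hh : 2 ≤ h) :
    GenVector (Matrix.ProjectiveSpecialLinearGroup (Fin 2) (ZMod 11)) h
      (periods11 a₂ a₃ a₅ a₆ a₁₁) := by
  obtain ⟨k, rfl⟩ : ∃ k, h = k + 2 := ⟨h - 2, by omega⟩
  by_cases h2 : Even a₂ <;> by_cases h3 : Even a₃ <;> by_cases h5 : Even a₅ <;>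
    by_cases h6 : Even a₆ <;> by_cases h11 : Even a₁₁
  · refine genAux k a₂ a₃ a₅ a₆ a₁₁ (φ (M 0 1 10 2)) (φ (M 0 1 10 1))
      ord_x ord_y ord_z ord_v ord_w PSL2_gen ?_
    simp only [altList_prod, h2, h3, h5, h6, h11, if_true, if_false, ite_true, ite_false,
      one_mul, mul_one]
    simp only [← map_commutatorElement, ← MonoidHom.map_mul]
    exact phi_eq_one (by decide)
  · refine genAux k a₂ a₃ a₅ a₆ a₁₁ (φ (M 0 2 5 8)) (φ (M 1 10 7 5))
      ord_x ord_y ord_z ord_v ord_w PSL2_gen ?_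
    simp only [altList_prod, h2, h3, h5, h6, h11, if_true, if_false, ite_true, ite_false,
      one_mul, mul_one]
    simp only [← map_commutatorElement, ← MonoidHom.map_mul]
    exact phi_eq_one (by decide)
  · refine genAux k a₂ a₃ a₅ a₆ a₁₁ (φ (M 1 0 1 1)) (φ (M 2 0 0 6))
      ord_x ord_y ord_z ord_v ord_w PSL2_gen ?_
    simp only [altList_prod, h2, h3, h5, h6, h11, if_true, if_false, ite_true, ite_false,
      one_mul, mul_one]
    simp only [← map_commutatorElement, ← MonoidHom.map_mul]
    exact phi_eq_one (by decide)
  · refine genAux k a₂ a₃ a₅ a₆ a₁₁ (φ (M 1 0 3 1)) (φ (M 3 0 0 4))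
      ord_x ord_y ord_z ord_v ord_w PSL2_gen ?_
    simp only [altList_prod, h2, h3, h5, h6, h11, if_true, if_false, ite_true, ite_false,
      one_mul, mul_one]
    simp only [← map_commutatorElement, ← MonoidHom.map_mul]
    exact phi_eq_one (by decide)
  · refine genAux k a₂ a₃ a₅ a₆ a₁₁ (φ (M 0 1 10 7)) (φ (M 2 4 10 4))
      ord_x ord_y ord_z ord_v ord_w PSL2_gen ?_
    simp only [altList_prod, h2, h3, h5, h6, h11, if_true, if_false, ite_true, ite_false,
      one_mul, mul_one]
    simp only [← map_commutatorElement, ← MonoidHom.map_mul]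
    exact phi_eq_one (by decide)
  · refine genAux k a₂ a₃ a₅ a₆ a₁₁ (φ (M 0 1 10 7)) (φ (M 1 6 1 7))
      ord_x ord_y ord_z ord_v ord_w PSL2_gen ?_
    simp only [altList_prod, h2, h3, h5, h6, h11, if_true, if_false, ite_true, ite_false,
      one_mul, mul_one]
    simp only [← map_commutatorElement, ← MonoidHom.map_mul]
    exact phi_eq_one (by decide)
  · refine genAux k a₂ a₃ a₅ a₆ a₁₁ (φ (M 0 1 10 1)) (φ (M 0 5 2 9))
      ord_x ord_y ord_z ord_v ord_w PSL2_gen ?_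
    simp only [altList_prod, h2, h3, h5, h6, h11, if_true, if_false, ite_true, ite_false,
      one_mul, mul_one]
    simp only [← map_commutatorElement, ← MonoidHom.map_mul]
    exact phi_eq_one (by decide)
  · refine genAux k a₂ a₃ a₅ a₆ a₁₁ (φ (M 0 1 10 6)) (φ (M 0 5 2 10))
      ord_x ord_y ord_z ord_v ord_w PSL2_gen ?_
    simp only [altList_prod, h2, h3, h5, h6, h11, if_true, if_false, ite_true, ite_false,
      one_mul, mul_one]
    simp only [← map_commutatorElement, ← MonoidHom.map_mul]
    exact phi_eq_one (by decide)
  · refine genAux k a₂ a₃ a₅ a₆ a₁₁ (φ (M 1 0 5 1)) (φ (M 4 0 0 3))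
      ord_x ord_y ord_z ord_v ord_w PSL2_gen ?_
    simp only [altList_prod, h2, h3, h5, h6, h11, if_true, if_false, ite_true, ite_false,
      one_mul, mul_one]
    simp only [← map_commutatorElement, ← MonoidHom.map_mul]
    exact phi_eq_one (by decide)
  · refine genAux k a₂ a₃ a₅ a₆ a₁₁ (φ (M 1 0 2 1)) (φ (M 5 0 0 9))
      ord_x ord_y ord_z ord_v ord_w PSL2_gen ?_
    simp only [altList_prod, h2, h3, h5, h6, h11, if_true, if_false, ite_true, ite_false,
      one_mul, mul_one]
    simp only [← map_commutatorElement, ← MonoidHom.map_mul]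
    exact phi_eq_one (by decide)
  · refine genAux k a₂ a₃ a₅ a₆ a₁₁ (φ (M 0 2 5 5)) (φ (M 2 6 1 9))
      ord_x ord_y ord_z ord_v ord_w PSL2_gen ?_
    simp only [altList_prod, h2, h3, h5, h6, h11, if_true, if_false, ite_true, ite_false,
      one_mul, mul_one]
    simp only [← map_commutatorElement, ← MonoidHom.map_mul]
    exact phi_eq_one (by decide)
  · refine genAux k a₂ a₃ a₅ a₆ a₁₁ (φ (M 0 1 10 4)) (φ (M 0 4 8 4))
      ord_x ord_y ord_z ord_v ord_w PSL2_gen ?_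
    simp only [altList_prod, h2, h3, h5, h6, h11, if_true, if_false, ite_true, ite_false,
      one_mul, mul_one]
    simp only [← map_commutatorElement, ← MonoidHom.map_mul]
    exact phi_eq_one (by decide)
  · refine genAux k a₂ a₃ a₅ a₆ a₁₁ (φ (M 0 1 10 1)) (φ (M 0 2 5 6))
      ord_x ord_y ord_z ord_v ord_w PSL2_gen ?_
    simp only [altList_prod, h2, h3, h5, h6, h11, if_true, if_false, ite_true, ite_false,
      one_mul, mul_one]
    simp only [← map_commutatorElement, ← MonoidHom.map_mul]
    exact phi_eq_one (by decide)
  · refine genAux k a₂ a₃ a₅ a₆ a₁₁ (φ (M 0 1 10 8)) (φ (M 0 2 5 4))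
      ord_x ord_y ord_z ord_v ord_w PSL2_gen ?_
    simp only [altList_prod, h2, h3, h5, h6, h11, if_true, if_false, ite_true, ite_false,
      one_mul, mul_one]
    simp only [← map_commutatorElement, ← MonoidHom.map_mul]
    exact phi_eq_one (by decide)
  · refine genAux k a₂ a₃ a₅ a₆ a₁₁ (φ (M 0 1 10 8)) (φ (M 1 7 9 9))
      ord_x ord_y ord_z ord_v ord_w PSL2_gen ?_
    simp only [altList_prod, h2, h3, h5, h6, h11, if_true, if_false, ite_true, ite_false,
      one_mul, mul_one]
    simp only [← map_commutatorElement, ← MonoidHom.map_mul]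
    exact phi_eq_one (by decide)
  · refine genAux k a₂ a₃ a₅ a₆ a₁₁ (φ (M 0 1 10 0)) (φ (M 0 2 5 2))
      ord_x ord_y ord_z ord_v ord_w PSL2_gen ?_
    simp only [altList_prod, h2, h3, h5, h6, h11, if_true, if_false, ite_true, ite_false,
      one_mul, mul_one]
    simp only [← map_commutatorElement, ← MonoidHom.map_mul]
    exact phi_eq_one (by decide)
  · refine genAux k a₂ a₃ a₅ a₆ a₁₁ (φ (M 1 0 1 1)) (φ (M 4 0 0 3))
      ord_x ord_y ord_z ord_v ord_w PSL2_gen ?_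
    simp only [altList_prod, h2, h3, h5, h6, h11, if_true, if_false, ite_true, ite_false,
      one_mul, mul_one]
    simp only [← map_commutatorElement, ← MonoidHom.map_mul]
    exact phi_eq_one (by decide)
  · refine genAux k a₂ a₃ a₅ a₆ a₁₁ (φ (M 1 0 5 1)) (φ (M 4 0 0 3))
      ord_x ord_y ord_z ord_v ord_w PSL2_gen ?_
    simp only [altList_prod, h2, h3, h5, h6, h11, if_true, if_false, ite_true, ite_false,
      one_mul, mul_one]
    simp only [← map_commutatorElement, ← MonoidHom.map_mul]
    exact phi_eq_one (by decide)
  · refine genAux k a₂ a₃ a₅ a₆ a₁₁ (φ (M 0 2 5 3)) (φ (M 0 5 2 8))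
      ord_x ord_y ord_z ord_v ord_w PSL2_gen ?_
    simp only [altList_prod, h2, h3, h5, h6, h11, if_true, if_false, ite_true, ite_false,
      one_mul, mul_one]
    simp only [← map_commutatorElement, ← MonoidHom.map_mul]
    exact phi_eq_one (by decide)
  · refine genAux k a₂ a₃ a₅ a₆ a₁₁ (φ (M 0 2 5 3)) (φ (M 1 6 5 9))
      ord_x ord_y ord_z ord_v ord_w PSL2_gen ?_
    simp only [altList_prod, h2, h3, h5, h6, h11, if_true, if_false, ite_true, ite_false,
      one_mul, mul_one]
    simp only [← map_commutatorElement, ← MonoidHom.map_mul]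
    exact phi_eq_one (by decide)
  · refine genAux k a₂ a₃ a₅ a₆ a₁₁ (φ (M 0 1 10 10)) (φ (M 0 2 5 5))
      ord_x ord_y ord_z ord_v ord_w PSL2_gen ?_
    simp only [altList_prod, h2, h3, h5, h6, h11, if_true, if_false, ite_true, ite_false,
      one_mul, mul_one]
    simp only [← map_commutatorElement, ← MonoidHom.map_mul]
    exact phi_eq_one (by decide)
  · refine genAux k a₂ a₃ a₅ a₆ a₁₁ (φ (M 0 1 10 6)) (φ (M 0 2 5 3))
      ord_x ord_y ord_z ord_v ord_w PSL2_gen ?_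
    simp only [altList_prod, h2, h3, h5, h6, h11, if_true, if_false, ite_true, ite_false,
      one_mul, mul_one]
    simp only [← map_commutatorElement, ← MonoidHom.map_mul]
    exact phi_eq_one (by decide)
  · refine genAux k a₂ a₃ a₅ a₆ a₁₁ (φ (M 0 1 10 4)) (φ (M 1 2 1 3))
      ord_x ord_y ord_z ord_v ord_w PSL2_gen ?_
    simp only [altList_prod, h2, h3, h5, h6, h11, if_true, if_false, ite_true, ite_false,
      one_mul, mul_one]
    simp only [← map_commutatorElement, ← MonoidHom.map_mul]
    exact phi_eq_one (by decide)
  · refine genAux k a₂ a₃ a₅ a₆ a₁₁ (φ (M 0 1 10 4)) (φ (M 0 3 7 10))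
      ord_x ord_y ord_z ord_v ord_w PSL2_gen ?_
    simp only [altList_prod, h2, h3, h5, h6, h11, if_true, if_false, ite_true, ite_false,
      one_mul, mul_one]
    simp only [← map_commutatorElement, ← MonoidHom.map_mul]
    exact phi_eq_one (by decide)
  · refine genAux k a₂ a₃ a₅ a₆ a₁₁ (φ (M 0 1 10 9)) (φ (M 0 4 8 8))
      ord_x ord_y ord_z ord_v ord_w PSL2_gen ?_
    simp only [altList_prod, h2, h3, h5, h6, h11, if_true, if_false, ite_true, ite_false,
      one_mul, mul_one]
    simp only [← map_commutatorElement, ← MonoidHom.map_mul]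
    exact phi_eq_one (by decide)
  · refine genAux k a₂ a₃ a₅ a₆ a₁₁ (φ (M 0 1 10 9)) (φ (M 0 2 5 5))
      ord_x ord_y ord_z ord_v ord_w PSL2_gen ?_
    simp only [altList_prod, h2, h3, h5, h6, h11, if_true, if_false, ite_true, ite_false,
      one_mul, mul_one]
    simp only [← map_commutatorElement, ← MonoidHom.map_mul]
    exact phi_eq_one (by decide)
  · refine genAux k a₂ a₃ a₅ a₆ a₁₁ (φ (M 0 1 10 5)) (φ (M 0 5 2 3))
      ord_x ord_y ord_z ord_v ord_w PSL2_gen ?_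
    simp only [altList_prod, h2, h3, h5, h6, h11, if_true, if_false, ite_true, ite_false,
      one_mul, mul_one]
    simp only [← map_commutatorElement, ← MonoidHom.map_mul]
    exact phi_eq_one (by decide)
  · refine genAux k a₂ a₃ a₅ a₆ a₁₁ (φ (M 0 1 10 0)) (φ (M 0 3 7 7))
      ord_x ord_y ord_z ord_v ord_w PSL2_gen ?_
    simp only [altList_prod, h2, h3, h5, h6, h11, if_true, if_false, ite_true, ite_false,
      one_mul, mul_one]
    simp only [← map_commutatorElement, ← MonoidHom.map_mul]
    exact phi_eq_one (by decide)
  · refine genAux k a₂ a₃ a₅ a₆ a₁₁ (φ (M 0 1 10 4)) (φ (M 2 7 1 4))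
      ord_x ord_y ord_z ord_v ord_w PSL2_gen ?_
    simp only [altList_prod, h2, h3, h5, h6, h11, if_true, if_false, ite_true, ite_false,
      one_mul, mul_one]
    simp only [← map_commutatorElement, ← MonoidHom.map_mul]
    exact phi_eq_one (by decide)
  · refine genAux k a₂ a₃ a₅ a₆ a₁₁ (φ (M 0 1 10 4)) (φ (M 3 4 7 6))
      ord_x ord_y ord_z ord_v ord_w PSL2_gen ?_
    simp only [altList_prod, h2, h3, h5, h6, h11, if_true, if_false, ite_true, ite_false,
      one_mul, mul_one]
    simp only [← map_commutatorElement, ← MonoidHom.map_mul]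
    exact phi_eq_one (by decide)
  · refine genAux k a₂ a₃ a₅ a₆ a₁₁ (φ (M 0 1 10 8)) (φ (M 0 1 10 4))
      ord_x ord_y ord_z ord_v ord_w PSL2_gen ?_
    simp only [altList_prod, h2, h3, h5, h6, h11, if_true, if_false, ite_true, ite_false,
      one_mul, mul_one]
    simp only [← map_commutatorElement, ← MonoidHom.map_mul]
    exact phi_eq_one (by decide)
  · refine genAux k a₂ a₃ a₅ a₆ a₁₁ (φ (M 0 1 10 0)) (φ (M 0 2 5 9))
      ord_x ord_y ord_z ord_v ord_w PSL2_gen ?_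
    simp only [altList_prod, h2, h3, h5, h6, h11, if_true, if_false, ite_true, ite_false,
      one_mul, mul_one]
    simp only [← map_commutatorElement, ← MonoidHom.map_mul]
    exact phi_eq_one (by decide)
end

section
/- There exist elements x, y, z of PSL(2,𝔽₇), each of order exactly 7, with x·y·z = 1 and such that {x, y, z} generates PSL(2,𝔽₇); that is, (0; 7, 7, 7) is a signature of PSL(2,𝔽₇). -/
open Matrix

namespace PSL277

abbrev SL7 := Matrix.SpecialLinearGroup (Fin 2) (ZMod 7)

instance : DecidableEq SL7 := fun A B => decidable_of_iff (A.val = B.val) Subtype.ext_iff.symm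

def a : SL7 := ⟨!![1,1;0,1], by decide⟩
def b : SL7 := ⟨!![1,0;3,1], by decide⟩
def d : SL7 := ⟨!![1,6;4,4], by decide⟩

lemma zmod7_cases : ∀ c : ZMod 7, c = 0 ∨ c = 1 ∨ c = 2 ∨ c = 3 ∨ c = 4 ∨ c = 5 ∨ c = 6 := by
  decide

lemma SL_ext_mem {K : Subgroup SL7} {M : Matrix (Fin 2) (Fin 2) (ZMod 7)} {h : M.det = 1}
    {w : SL7} (hw : w ∈ K) (he : M = w.val) : (⟨M, h⟩ : SL7) ∈ K := by
  rw [show (⟨M, h⟩ : SL7) = w from Subtype.ext he]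
  exact hw

lemma diag_mem {K : Subgroup SL7} (ha : a ∈ K) (hb : b ∈ K) (u v : ZMod 7)
    (h : det !![u, 0; 0, v] = 1) : (⟨!![u, 0; 0, v], h⟩ : SL7) ∈ K := by
  have h' : u * v = 1 := by
    have h2 := h
    rw [Matrix.det_fin_two_of] at h2
    linear_combination h2
  rcases zmod7_cases u with hu | hu | hu | hu | hu | hu | hu <;> subst hu
  · rw [zero_mul] at h'; exact absurd h' (by decide)
  · have hv : v = 1 := by
      have hall : ∀ w : ZMod 7, 1 * w = 1 → w = 1 := by decide
      exact hall v h'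
    subst hv
    exact SL_ext_mem (one_mem K) (by decide)
  · have hv : v = 4 := by
      have hall : ∀ w : ZMod 7, 2 * w = 1 → w = 4 := by decide
      exact hall v h'
    subst hv
    exact SL_ext_mem (mul_mem (mul_mem (mul_mem (pow_mem ha 2) (pow_mem hb 6)) (pow_mem ha 6))
      (pow_mem hb 2)) (by decide)
  · have hv : v = 5 := by
      have hall : ∀ w : ZMod 7, 3 * w = 1 → w = 5 := by decide
      exact hall v h'
    subst hv
    exact SL_ext_mem (mul_mem (mul_mem (mul_mem (mul_mem (mul_mem ha (pow_mem hb 6))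
      (pow_mem ha 6)) (pow_mem hb 6)) (pow_mem ha 6)) hb) (by decide)
  · have hv : v = 2 := by
      have hall : ∀ w : ZMod 7, 4 * w = 1 → w = 2 := by decide
      exact hall v h'
    subst hv
    exact SL_ext_mem (mul_mem (mul_mem (mul_mem (mul_mem ha (pow_mem hb 5)) ha) hb) ha)
      (by decide)
  · have hv : v = 3 := by
      have hall : ∀ w : ZMod 7, 5 * w = 1 → w = 3 := by decide
      exact hall v h'
    subst hv
    exact SL_ext_mem (mul_mem (mul_mem (mul_mem (mul_mem (mul_mem hb (pow_mem ha 6))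
      (pow_mem hb 6)) (pow_mem ha 6)) (pow_mem hb 6)) ha) (by decide)
  · have hv : v = 6 := by
      have hall : ∀ w : ZMod 7, 6 * w = 1 → w = 6 := by decide
      exact hall v h'
    subst hv
    exact SL_ext_mem (mul_mem (mul_mem (mul_mem (pow_mem ha 3) (pow_mem hb 6)) (pow_mem ha 3))
      (pow_mem hb 6)) (by decide)

lemma transvec01_mem {K : Subgroup SL7} (ha : a ∈ K) (c : ZMod 7)
    (h : det (Matrix.transvection (0 : Fin 2) 1 c) = 1) :
    (⟨Matrix.transvection (0 : Fin 2) 1 c, h⟩ : SL7) ∈ K := by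
  rcases zmod7_cases c with hc | hc | hc | hc | hc | hc | hc <;> subst hc
  · exact SL_ext_mem (one_mem K) (by decide)
  · exact SL_ext_mem ha (by decide)
  · exact SL_ext_mem (pow_mem ha 2) (by decide)
  · exact SL_ext_mem (pow_mem ha 3) (by decide)
  · exact SL_ext_mem (pow_mem ha 4) (by decide)
  · exact SL_ext_mem (pow_mem ha 5) (by decide)
  · exact SL_ext_mem (pow_mem ha 6) (by decide)

lemma transvec10_mem {K : Subgroup SL7} (hb : b ∈ K) (c : ZMod 7)
    (h : det (Matrix.transvection (1 : Fin 2) 0 c) = 1) :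
    (⟨Matrix.transvection (1 : Fin 2) 0 c, h⟩ : SL7) ∈ K := by
  rcases zmod7_cases c with hc | hc | hc | hc | hc | hc | hc <;> subst hc
  · exact SL_ext_mem (one_mem K) (by decide)
  · exact SL_ext_mem (pow_mem hb 5) (by decide)
  · exact SL_ext_mem (pow_mem hb 3) (by decide)
  · exact SL_ext_mem hb (by decide)
  · exact SL_ext_mem (pow_mem hb 6) (by decide)
  · exact SL_ext_mem (pow_mem hb 4) (by decide)
  · exact SL_ext_mem (pow_mem hb 2) (by decide)

lemma a7 : a ^ 7 = 1 := by decide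
lemma b7 : b ^ 7 = 1 := by decide
lemma abd : a * b * d = 1 := by decide
lemma neg_one_sq : ((-1 : ZMod 7)) ^ Fintype.card (Fin 2) = 1 := by decide
lemma d7_scalar : Matrix.scalar (Fin 2) (-1 : ZMod 7) = (d ^ 7).val := by
  rw [Matrix.scalar_apply]; decide
lemma a_entry : a.val 0 1 ≠ 0 := by decide
lemma b_entry : b.val 1 0 ≠ 0 := by decide
lemma d_entry : d.val 0 1 ≠ 0 := by decide
lemma fin_ne01 : (0 : Fin 2) ≠ 1 := by decide
lemma fin_ne10 : (1 : Fin 2) ≠ 0 := by decide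

lemma closure_ab : Subgroup.closure ({a, b} : Set SL7) = ⊤ := by
  haveI : Fact (Nat.Prime 7) := ⟨by norm_num⟩
  rw [Subgroup.eq_top_iff']
  intro g
  set K := Subgroup.closure ({a, b} : Set SL7) with hK
  have ha : a ∈ K := Subgroup.subset_closure (by simp)
  have hb : b ∈ K := Subgroup.subset_closure (by simp)
  have main : g.val.det = 1 ∧ ∀ h : g.val.det = 1, (⟨g.val, h⟩ : SL7) ∈ K := by
    refine Matrix.diagonal_transvection_induction
      (fun N => N.det = 1 ∧ ∀ h : N.det = 1, (⟨N, h⟩ : SL7) ∈ K) g.val ?_ ?_ ?_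
    · intro D hD
      have h1 : det (Matrix.diagonal D) = 1 := by rw [hD, g.prop]
      refine ⟨h1, fun h => ?_⟩
      have hDe : Matrix.diagonal D = !![D 0, 0; 0, D 1] := by
        ext i j
        fin_cases i <;> fin_cases j <;> simp [Matrix.diagonal]
      rw [show (⟨Matrix.diagonal D, h⟩ : SL7) = ⟨!![D 0, 0; 0, D 1], hDe ▸ h⟩ from
        Subtype.ext hDe]
      exact diag_mem ha hb _ _ _
    · rintro ⟨i, j, hij, c⟩
      rw [Matrix.TransvectionStruct.toMatrix_mk]
      refine ⟨Matrix.det_transvection_of_ne _ _ hij c, fun h => ?_⟩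
      fin_cases i <;> fin_cases j
      · exact absurd rfl hij
      · exact transvec01_mem ha c h
      · exact transvec10_mem hb c h
      · exact absurd rfl hij
    · rintro A B ⟨hA, hAm⟩ ⟨hB, hBm⟩
      refine ⟨by rw [Matrix.det_mul, hA, hB, one_mul], fun h => ?_⟩
      exact SL_ext_mem (mul_mem (hAm hA) (hBm hB)) rfl
  exact main.2 g.prop

lemma mk_ne_one {m : SL7} (i j : Fin 2) (hij : i ≠ j) (hne : m.val i j ≠ 0) :
    QuotientGroup.mk' (Subgroup.center SL7) m ≠ 1 := by
  intro h
  have hm : m ∈ Subgroup.center SL7 := (QuotientGroup.eq_one_iff m).mp h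
  obtain ⟨r, -, hr⟩ := Matrix.SpecialLinearGroup.mem_center_iff.mp hm
  rw [Matrix.scalar_apply] at hr
  have h2 := congrFun (congrFun hr i) j
  rw [Matrix.diagonal_apply_ne _ hij] at h2
  exact hne h2.symm

end PSL277

/-- `(0; 7, 7, 7)` is a signature of `PSL(2, 𝔽₇)`. -/
theorem signature_0_7_7_7_PSL2_F7 :
    ∃ x y z : Matrix.ProjectiveSpecialLinearGroup (Fin 2) (ZMod 7),
      orderOf x = 7 ∧ orderOf y = 7 ∧ orderOf z = 7 ∧ x * y * z = 1 ∧
      Subgroup.closure {x, y, z} = ⊤ := by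
  haveI : Fact (Nat.Prime 7) := ⟨by norm_num⟩
  let σ : PSL277.SL7 →* Matrix.ProjectiveSpecialLinearGroup (Fin 2) (ZMod 7) :=
    QuotientGroup.mk' (Subgroup.center PSL277.SL7)
  refine ⟨σ PSL277.a, σ PSL277.b, σ PSL277.d, ?_, ?_, ?_, ?_, ?_⟩
  · apply orderOf_eq_prime
    · rw [← _root_.map_pow, PSL277.a7, _root_.map_one]
    · exact PSL277.mk_ne_one 0 1 PSL277.fin_ne01 PSL277.a_entry
  · apply orderOf_eq_prime
    · rw [← _root_.map_pow, PSL277.b7, _root_.map_one]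
    · exact PSL277.mk_ne_one 1 0 PSL277.fin_ne10 PSL277.b_entry
  · apply orderOf_eq_prime
    · rw [← _root_.map_pow]
      have hc : PSL277.d ^ 7 ∈ Subgroup.center PSL277.SL7 :=
        Matrix.SpecialLinearGroup.mem_center_iff.mpr ⟨-1, PSL277.neg_one_sq, PSL277.d7_scalar⟩
      exact (QuotientGroup.eq_one_iff _).mpr hc
    · exact PSL277.mk_ne_one 0 1 PSL277.fin_ne01 PSL277.d_entry
  · rw [← _root_.map_mul, ← _root_.map_mul, PSL277.abd, _root_.map_one]
  · have himg : Subgroup.closure ({σ PSL277.a, σ PSL277.b} :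
        Set (Matrix.ProjectiveSpecialLinearGroup (Fin 2) (ZMod 7))) = ⊤ := by
      have himage : ({σ PSL277.a, σ PSL277.b} :
          Set (Matrix.ProjectiveSpecialLinearGroup (Fin 2) (ZMod 7))) =
          σ '' {PSL277.a, PSL277.b} := by
        rw [Set.image_insert_eq, Set.image_singleton]
      rw [himage, ← MonoidHom.map_closure, PSL277.closure_ab]
      exact Subgroup.map_top_of_surjective σ (QuotientGroup.mk'_surjective _)
    rw [eq_top_iff, ← himg]
    apply Subgroup.closure_mono
    intro t ht
    rcases ht with h | h
    · exact Or.inl h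
    · exact Or.inr (Or.inl h)
end

section
/- There exist elements x₁, x₂, x₃, x₄, x₅ of PSL(2,𝔽₁₁), each of order exactly 2, with ordered product x₁·x₂·x₃·x₄·x₅ = 1 and such that {x₁, x₂, x₃, x₄, x₅} generates PSL(2,𝔽₁₁); that is, (0; 2, 2, 2, 2, 2) is a signature of PSL(2,𝔽₁₁) (contrary to an earlier claim in the literature). -/
private instance fact11 : Fact (Nat.Prime 11) := ⟨by norm_num⟩
private instance fact5 : Fact (Nat.Prime 5) := ⟨by norm_num⟩

local notation "SL2" => Matrix.SpecialLinearGroup (Fin 2) (ZMod 11)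
local notation "G11" => Matrix.ProjectiveSpecialLinearGroup (Fin 2) (ZMod 11)

private instance : DecidableEq SL2 :=
  fun A B => decidable_of_iff (A.val = B.val) Subtype.ext_iff.symm

/-! ### Cardinality of `SL(2, 𝔽₁₁)` -/

private lemma card_units_zmod11 : Nat.card (ZMod 11)ˣ = 10 := by
  rw [Nat.card_eq_fintype_card, ZMod.card_units_eq_totient]
  decide

private lemma card_GL11 : Nat.card (Matrix.GeneralLinearGroup (Fin 2) (ZMod 11)) = 13200 := by
  rw [Matrix.card_GL_field]
  simp [ZMod.card, Fin.prod_univ_two]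

private def detGL : Matrix.GeneralLinearGroup (Fin 2) (ZMod 11) →* (ZMod 11)ˣ := Matrix.GeneralLinearGroup.det

private lemma detGL_surj : Function.Surjective detGL := by
  intro u
  refine ⟨Matrix.GeneralLinearGroup.mkOfDetNeZero !![(u : ZMod 11), 0; 0, 1] ?_, ?_⟩
  · simp [Matrix.det_fin_two_of]
  · ext
    show Matrix.det !![(u : ZMod 11), 0; 0, 1] = (u : ZMod 11)
    simp [Matrix.det_fin_two_of]

private def slEquivKer : SL2 ≃* detGL.ker where
  toFun A := ⟨Matrix.SpecialLinearGroup.toGL A, by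
    ext
    simp [detGL, Matrix.GeneralLinearGroup.val_det_apply, Matrix.SpecialLinearGroup.toGL, A.2]⟩
  invFun g := ⟨(g : Matrix.GeneralLinearGroup (Fin 2) (ZMod 11)).val, by
    have := g.2
    rw [MonoidHom.mem_ker] at this
    have := congrArg Units.val this
    simpa [detGL, Matrix.GeneralLinearGroup.val_det_apply] using this⟩
  left_inv A := by ext : 1; rfl
  right_inv g := by ext : 2; rfl
  map_mul' A B := by ext : 2; rfl

private lemma card_SL2 : Nat.card SL2 = 1320 := by
  have h := Subgroup.card_eq_card_quotient_mul_card_subgroup detGL.ker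
  rw [Nat.card_congr (QuotientGroup.quotientKerEquivOfSurjective detGL detGL_surj).toEquiv,
    card_units_zmod11, card_GL11, ← Nat.card_congr slEquivKer.toEquiv] at h
  omega

/-! ### The center of `SL(2, 𝔽₁₁)` has two elements -/

private def Nsl : SL2 := ⟨-1, by decide⟩

private lemma sq_roots : ∀ r : ZMod 11, r ^ 2 = 1 → r = 1 ∨ r = -1 := by decide

private lemma scalar_one :
    (Matrix.scalar (Fin 2)) (1 : ZMod 11) = ((1 : SL2) : Matrix (Fin 2) (Fin 2) (ZMod 11)) := by
  decide

private lemma scalar_negone :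
    (Matrix.scalar (Fin 2)) (-1 : ZMod 11) = ((Nsl : SL2) : Matrix (Fin 2) (Fin 2) (ZMod 11)) := by
  decide

private lemma center_eq : (Subgroup.center SL2 : Set SL2) = {1, Nsl} := by
  ext A
  rw [SetLike.mem_coe, Matrix.SpecialLinearGroup.mem_center_iff]
  constructor
  · rintro ⟨r, hr, hrA⟩
    rw [Fintype.card_fin] at hr
    rcases sq_roots r hr with rfl | rfl
    · left; exact (Subtype.ext (by rw [← hrA, scalar_one])).symm
    · right; exact (Subtype.ext (by rw [← hrA, scalar_negone])).symm
  · rintro (rfl | rfl)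
    · exact ⟨1, by rw [Fintype.card_fin]; decide, scalar_one⟩
    · exact ⟨-1, by rw [Fintype.card_fin]; decide, scalar_negone⟩

private lemma card_center : Nat.card (Subgroup.center SL2) = 2 := by
  rw [← SetLike.coe_sort_coe, center_eq, Nat.card_coe_set_eq,
    Set.ncard_pair (fun (h : (1 : SL2) = Nsl) => absurd (congrArg Subtype.val h) (by decide))]

private lemma card_PSL : Nat.card G11 = 660 := by
  have h := Subgroup.card_eq_card_quotient_mul_card_subgroup (Subgroup.center SL2)
  rw [card_SL2, card_center] at h
  show Nat.card (SL2 ⧸ Subgroup.center SL2) = 660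
  omega

/-! ### Klein four subgroups -/

private lemma exists_klein {G : Type*} [Group G] {a b : G} (ha : a * a = 1) (hb : b * b = 1)
    (hab : (a * b) * (a * b) = 1) (h1 : a ≠ 1) (h2 : b ≠ 1) (h3 : a * b ≠ 1) :
    ∃ K : Subgroup G, (K : Set G) = {1, a, b, a * b} ∧ Nat.card K = 4 := by
  have ia : a⁻¹ = a := inv_eq_of_mul_eq_one_right ha
  have ib : b⁻¹ = b := inv_eq_of_mul_eq_one_right hb
  have hba : b * a = a * b := by
    calc b * a = b⁻¹ * a⁻¹ := by rw [ia, ib]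
      _ = (a * b)⁻¹ := by rw [_root_.mul_inv_rev]
      _ = a * b := inv_eq_of_mul_eq_one_right hab
  have ha2 : ∀ c, a * (a * c) = c := fun c => by rw [← mul_assoc, ha, one_mul]
  have hb2 : ∀ c, b * (b * c) = c := fun c => by rw [← mul_assoc, hb, one_mul]
  have hba2 : ∀ c, b * (a * c) = a * (b * c) := fun c => by
    rw [← mul_assoc, hba, mul_assoc]
  have hne1 : a ≠ b := fun h => h3 (by rw [h, hb])
  have hne2 : a ≠ a * b := fun h => h2 (mul_left_cancel (a := a) (by rw [mul_one]; exact h)).symm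
  have hne3 : b ≠ a * b := fun h => h1 (mul_right_cancel (b := b) (a := 1) (c := a)
    (by rw [one_mul]; exact h)).symm
  refine ⟨{ carrier := {1, a, b, a * b}
            one_mem' := Or.inl rfl
            mul_mem' := ?_
            inv_mem' := ?_ }, rfl, ?_⟩
  · rintro x y (rfl | rfl | rfl | rfl) (rfl | rfl | rfl | rfl) <;>
      simp [Set.mem_insert_iff, mul_assoc, ha, hb, hba, ha2, hb2, hba2]
  · rintro x (rfl | rfl | rfl | rfl) <;>
      simp [Set.mem_insert_iff, ia, ib, hba]
  · rw [← SetLike.coe_sort_coe]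
    show Nat.card ({1, a, b, a * b} : Set G) = 4
    rw [Nat.card_coe_set_eq,
      Set.ncard_insert_of_notMem (by
        simp only [Set.mem_insert_iff, Set.mem_singleton_iff]
        push_neg
        exact ⟨fun h => h1 h.symm, fun h => h2 h.symm, fun h => h3 h.symm⟩),
      Set.ncard_insert_of_notMem (by
        simp only [Set.mem_insert_iff, Set.mem_singleton_iff]
        push_neg
        exact ⟨hne1, hne2⟩),
      Set.ncard_pair hne3]

/-! ### The projection and order computations -/

private def pr : SL2 →* G11 := QuotientGroup.mk' (Subgroup.center SL2)

private def Tsl : SL2 := ⟨!![1, 1; 0, 1], by decide⟩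

private lemma pr_ne_one {A : SL2} (h : ¬ (Tsl * A = A * Tsl)) : pr A ≠ 1 := fun hc =>
  h (Subgroup.mem_center_iff.mp ((QuotientGroup.eq_one_iff A).mp hc) Tsl)

private lemma pr_Nsl : pr Nsl = 1 := by
  apply (QuotientGroup.eq_one_iff Nsl).mpr
  rw [← SetLike.mem_coe, center_eq]
  right
  rfl

private lemma orderTwo {A : SL2} (h2 : A * A = Nsl) (hT : ¬ (Tsl * A = A * Tsl)) :
    orderOf (pr A) = 2 :=
  orderOf_eq_prime (by rw [pow_two, ← _root_.map_mul, h2, pr_Nsl]) (pr_ne_one hT)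

private lemma orderPrime (p : ℕ) [Fact p.Prime] {A : SL2} (h : A ^ p = Nsl)
    (hT : ¬ (Tsl * A = A * Tsl)) : orderOf (pr A) = p :=
  orderOf_eq_prime (by rw [← _root_.map_pow, h, pr_Nsl]) (pr_ne_one hT)

private def A1 : SL2 := ⟨!![10, 8; 8, 1], by decide⟩
private def A2 : SL2 := ⟨!![6, 1; 7, 5], by decide⟩
private def A3 : SL2 := ⟨!![3, 4; 3, 8], by decide⟩
private def A4 : SL2 := ⟨!![7, 1; 5, 4], by decide⟩
private def A5 : SL2 := ⟨!![4, 6; 10, 7], by decide⟩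

/-- `(0; 2, 2, 2, 2, 2)` is a signature of `PSL(2, 𝔽₁₁)`. -/
theorem signature_five_involutions_PSL2_F11 :
    ∃ x₁ x₂ x₃ x₄ x₅ : Matrix.ProjectiveSpecialLinearGroup (Fin 2) (ZMod 11),
      orderOf x₁ = 2 ∧ orderOf x₂ = 2 ∧ orderOf x₃ = 2 ∧ orderOf x₄ = 2 ∧ orderOf x₅ = 2 ∧
      x₁ * x₂ * x₃ * x₄ * x₅ = 1 ∧
      Subgroup.closure {x₁, x₂, x₃, x₄, x₅} = ⊤ := by
  refine ⟨pr A1, pr A2, pr A3, pr A4, pr A5,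
    orderTwo (by decide) (by decide), orderTwo (by decide) (by decide),
    orderTwo (by decide) (by decide), orderTwo (by decide) (by decide),
    orderTwo (by decide) (by decide), ?_, ?_⟩
  · rw [← _root_.map_mul, ← _root_.map_mul, ← _root_.map_mul, ← _root_.map_mul,
      show A1 * A2 * A3 * A4 * A5 = 1 by decide, _root_.map_one]
  · set S := Subgroup.closure {pr A1, pr A2, pr A3, pr A4, pr A5} with hS
    have m : ∀ i ∈ ({pr A1, pr A2, pr A3, pr A4, pr A5} : Set G11), i ∈ S :=
      fun i hi => Subgroup.subset_closure hi
    have m1 : pr A1 ∈ S := m _ (by simp)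
    have m2 : pr A2 ∈ S := m _ (by simp)
    have m3 : pr A3 ∈ S := m _ (by simp)
    have m4 : pr A4 ∈ S := m _ (by simp)
    have m5 : pr A5 ∈ S := m _ (by simp)
    -- an element of order 11
    have h11 : 11 ∣ Nat.card S := by
      have hmem : pr (A1 * A2 * A5 * A4) ∈ S := by
        rw [_root_.map_mul, _root_.map_mul, _root_.map_mul]
        exact mul_mem (mul_mem (mul_mem m1 m2) m5) m4
      have := Subgroup.orderOf_dvd_natCard S hmem
      rwa [orderPrime 11 (by decide) (by decide)] at this
    -- an element of order 5
    have h5 : 5 ∣ Nat.card S := by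
      have hmem : pr (A1 * A2) ∈ S := by
        rw [_root_.map_mul]; exact mul_mem m1 m2
      have := Subgroup.orderOf_dvd_natCard S hmem
      rwa [orderPrime 5 (by decide) (by decide)] at this
    -- an element of order 3
    have h3 : 3 ∣ Nat.card S := by
      have hmem : pr (A1 * A4) ∈ S := by
        rw [_root_.map_mul]; exact mul_mem m1 m4
      have := Subgroup.orderOf_dvd_natCard S hmem
      rwa [orderPrime 3 (by decide) (by decide)] at this
    -- a Klein four subgroup
    have h4 : 4 ∣ Nat.card S := by
      obtain ⟨K, hKset, hK4⟩ := exists_klein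
        (a := pr A1) (b := pr (A2 * A1 * A4 * A3))
        (by rw [← _root_.map_mul, show A1 * A1 = Nsl by decide, pr_Nsl])
        (by rw [← _root_.map_mul, show (A2 * A1 * A4 * A3) * (A2 * A1 * A4 * A3) = Nsl by decide, pr_Nsl])
        (by rw [← _root_.map_mul, ← _root_.map_mul,
          show A1 * (A2 * A1 * A4 * A3) * (A1 * (A2 * A1 * A4 * A3)) = Nsl by decide, pr_Nsl])
        (pr_ne_one (by decide))
        (pr_ne_one (by decide))
        (by rw [← _root_.map_mul]; exact pr_ne_one (by decide))
      have hKS : K ≤ S := by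
        intro x hx
        rw [← SetLike.mem_coe, hKset] at hx
        have mb : pr (A2 * A1 * A4 * A3) ∈ S := by
          rw [_root_.map_mul, _root_.map_mul, _root_.map_mul]
          exact mul_mem (mul_mem (mul_mem m2 m1) m4) m3
        rcases hx with rfl | rfl | rfl | rfl
        · exact one_mem S
        · exact m1
        · exact mb
        · exact mul_mem m1 mb
      exact hK4 ▸ Subgroup.card_dvd_of_le hKS
    have h660 : 660 ∣ Nat.card S := by
      have h12 : 12 ∣ Nat.card S := (Nat.Coprime.mul_dvd_of_dvd_of_dvd (by norm_num) h4 h3)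
      have h60 : 60 ∣ Nat.card S := (Nat.Coprime.mul_dvd_of_dvd_of_dvd (by norm_num) h12 h5)
      exact (Nat.Coprime.mul_dvd_of_dvd_of_dvd (by norm_num) h60 h11)
    have hdvd : Nat.card S ∣ 660 := card_PSL ▸ Subgroup.card_subgroup_dvd_card S
    have hcard : Nat.card S = 660 := Nat.dvd_antisymm hdvd h660
    exact Subgroup.eq_top_of_card_eq S (by rw [hcard, card_PSL])
end

section
/- There exist elements x, y of PSL(2,𝔽₁₁) such that the commutator ⁅x, y⁆ has order exactly 2 and {x, y} generates PSL(2,𝔽₁₁); that is, (1; 2) is a signature of PSL(2,𝔽₁₁). -/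
open Matrix
open scoped commutatorElement

instance inst_s16 : Fact (Nat.Prime 11) := ⟨by norm_num⟩
abbrev F := ZMod 11
abbrev SL := Matrix.SpecialLinearGroup (Fin 2) F

@[simp] lemma SL_mk_mul_mk (A B : Matrix (Fin 2) (Fin 2) F) (hA : A.det = 1) (hB : B.det = 1) :
    (@HMul.hMul SL SL SL _ ⟨A, hA⟩ ⟨B, hB⟩).1 = A * B := rfl
@[simp] lemma SL_mul_mk (A : SL) (B : Matrix (Fin 2) (Fin 2) F) (hB : B.det = 1) :
    (@HMul.hMul SL SL SL _ A ⟨B, hB⟩).1 = A.1 * B := rfl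
@[simp] lemma SL_mk_mul (A : Matrix (Fin 2) (Fin 2) F) (hA : A.det = 1) (B : SL) :
    (@HMul.hMul SL SL SL _ ⟨A, hA⟩ B).1 = A * B.1 := rfl
@[simp] lemma SL_mk_pow (A : Matrix (Fin 2) (Fin 2) F) (hA : A.det = 1) (n : ℕ) :
    (@HPow.hPow SL ℕ SL _ ⟨A, hA⟩ n).1 = A ^ n := rfl

def U (x : F) : SL := ⟨!![1, x; 0, 1], by simp [Matrix.det_fin_two_of]⟩
def L (x : F) : SL := ⟨!![1, 0; x, 1], by simp [Matrix.det_fin_two_of]⟩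
def S : SL := ⟨!![0, -1; 1, 0], by simp [Matrix.det_fin_two_of]⟩

lemma U_mul (x y : F) : U x * U y = U (x + y) := by
  ext i j
  simp [U, Matrix.SpecialLinearGroup.coe_mul, Matrix.mul_fin_two]
  fin_cases i <;> fin_cases j <;> simp [add_comm]

example : True := trivial

lemma U_pow (n : ℕ) : (U 1) ^ n = U n := by
  induction n with
  | zero => ext i j; simp [U]; fin_cases i <;> fin_cases j <;> simp
  | succ k ih => rw [pow_succ, ih, U_mul]; push_cast; ring_nf

lemma L_eq (x : F) : L x = S * U (-x) * S⁻¹ := by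
  rw [eq_mul_inv_iff_mul_eq]
  ext i j
  fin_cases i <;> fin_cases j <;>
    simp [U, L, S, Matrix.SpecialLinearGroup.coe_mul, Matrix.mul_fin_two]

lemma decomp (g : SL) (hc : g.1 1 0 ≠ 0) :
    g = U ((g.1 0 0 - 1) / g.1 1 0) * L (g.1 1 0) * U ((g.1 1 1 - 1) / g.1 1 0) := by
  have hdet : g.1 0 0 * g.1 1 1 - g.1 0 1 * g.1 1 0 = 1 := by
    rw [← Matrix.det_fin_two]; exact g.2
  ext i j
  fin_cases i <;> fin_cases j <;>
    simp [U, L, Matrix.SpecialLinearGroup.coe_mul, Matrix.mul_fin_two] <;>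
    field_simp <;> ring_nf <;>
    first
      | rfl
      | linear_combination hdet
      | linear_combination (-2 : F) * hdet
      | linear_combination (2 : F) * hdet
      | linear_combination (-3 : F) * hdet
      | linear_combination (3 : F) * hdet
      | linear_combination (-1 : F) * hdet

def H : Subgroup SL := Subgroup.closure {U 3, S}

lemma U_mem (x : F) : U x ∈ H := by
  have h1 : U 3 ∈ H := Subgroup.subset_closure (by simp)
  have h4 : (U 3) ^ 4 = U 1 := by
    have : (U 3) = (U 1) ^ 3 := by rw [U_pow]; norm_num
    rw [this, ← pow_mul, U_pow]; norm_num; rfl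
  have hU1 : U 1 ∈ H := h4 ▸ pow_mem h1 4
  have hx : U x = (U 1) ^ (x.val) := by rw [U_pow, ZMod.natCast_val, ZMod.cast_id]
  rw [hx]; exact pow_mem hU1 _

lemma S_mem : S ∈ H := Subgroup.subset_closure (by simp)

lemma L_mem (x : F) : L x ∈ H := by
  rw [L_eq]
  exact mul_mem (mul_mem S_mem (U_mem _)) (inv_mem S_mem)

lemma H_eq_top : H = ⊤ := by
  rw [eq_top_iff]
  intro g _
  by_cases hc : g.1 1 0 = 0
  · have hdet : g.1 0 0 * g.1 1 1 - g.1 0 1 * g.1 1 0 = 1 := by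
      rw [← Matrix.det_fin_two]; exact g.2
    have ha : g.1 0 0 ≠ 0 := by
      intro h; rw [h, hc] at hdet; simp at hdet
    have hg' : (L 1 * g).1 1 0 ≠ 0 := by
      simpa [L, Matrix.SpecialLinearGroup.coe_mul, Matrix.mul_apply, Fin.sum_univ_two, hc]
        using ha
    have : L 1 * g ∈ H := by rw [decomp _ hg']; exact mul_mem (mul_mem (U_mem _) (L_mem _)) (U_mem _)
    have := mul_mem (inv_mem (L_mem 1)) this
    rwa [inv_mul_cancel_left] at this
  · rw [decomp _ hc]; exact mul_mem (mul_mem (U_mem _) (L_mem _)) (U_mem _)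

def C : SL := ⟨!![10, 3; 3, 1], by decide⟩
def N : SL := ⟨!![-1, 0; 0, -1], by decide⟩

lemma comm_eq : ⁅U 3, S⁆ = C := by
  rw [commutatorElement_def, mul_inv_eq_iff_eq_mul, mul_inv_eq_iff_eq_mul]
  ext i j
  fin_cases i <;> fin_cases j <;>
    simp [U, S, C, Matrix.SpecialLinearGroup.coe_mul, Matrix.mul_fin_two] <;> decide

lemma C_sq : C ^ 2 = N := by
  rw [pow_two]
  ext i j
  fin_cases i <;> fin_cases j <;>
    simp [C, N, Matrix.SpecialLinearGroup.coe_mul, Matrix.mul_fin_two] <;> decide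

lemma N_mem_center : N ∈ Subgroup.center SL := by
  rw [Subgroup.mem_center_iff]
  intro g
  ext i j
  fin_cases i <;> fin_cases j <;>
    simp [N, Matrix.SpecialLinearGroup.coe_mul, Matrix.mul_apply, Fin.sum_univ_two]

lemma C_not_center : C ∉ Subgroup.center SL := by
  rw [Subgroup.mem_center_iff]
  intro h
  have h1 := h (U 1)
  have : (U 1 * C).1 0 0 = (C * U 1).1 0 0 := by rw [h1]
  revert this
  simp [U, C, Matrix.SpecialLinearGroup.coe_mul, Matrix.mul_fin_two]
  decide

/-- `(1; 2)` is a signature of `PSL(2, 𝔽₁₁)`: there is a generating pair whose commutator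
has order exactly `2`. -/
theorem signature_1_2_PSL2_F11 :
    ∃ x y : Matrix.ProjectiveSpecialLinearGroup (Fin 2) (ZMod 11),
      orderOf ⁅x, y⁆ = 2 ∧ Subgroup.closure {x, y} = ⊤ := by
  classical
  set f : SL →* Matrix.ProjectiveSpecialLinearGroup (Fin 2) (ZMod 11) :=
    QuotientGroup.mk' (Subgroup.center SL) with hf
  refine ⟨f (U 3), f S, ?_, ?_⟩
  · have hcomm : ⁅f (U 3), f S⁆ = f C := by rw [← map_commutatorElement, comm_eq]
    rw [hcomm]
    refine orderOf_eq_prime ?_ ?_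
    · rw [← map_pow, C_sq]
      exact (QuotientGroup.eq_one_iff N).mpr N_mem_center
    · intro h
      exact C_not_center ((QuotientGroup.eq_one_iff C).mp h)
  · have h1 : Subgroup.map f H = ⊤ := by
      rw [H_eq_top]
      exact Subgroup.map_top_of_surjective f (QuotientGroup.mk'_surjective _)
    rw [H, MonoidHom.map_closure] at h1
    rw [← h1]
    congr 1
    simp [Set.image_insert_eq]
end
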